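/- arXiv:2002.09488 — 3 statements merged into one kernel-verified Lean document; each statement's English description precedes it below -/
import Mathlib

section
/- Let 0 < ρ < 1, and define shifted Chebyshev polynomials of the second kind by Q_0(x) = 1, Q_1(x) = (x − (1+ρ))/√ρ, and Q_{k+1}(x) = ((x − (1+ρ))/√ρ)·Q_k(x) − Q_{k−1}(x). Let u_k = ∫ Q_k(x) μ_ρ(x) dx, where μ_ρ is the Marchenko–Pastur density with parameter ρ. Then u_k = (−1)^k ρ^{k/2} for all k ≥ 0. -/
open Polynomial Real

noncomputable def mpDensity (ρ x : ℝ) : ℝ :=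
  Real.sqrt (((1 + Real.sqrt ρ) ^ 2 - x) * (x - (1 - Real.sqrt ρ) ^ 2)) /
    (2 * Real.pi * ρ * x)

set_option maxHeartbeats 400000 in
/-- for the shifted Chebyshev polynomials of the second kind
Q_0 = 1, Q_1 = (X − (1+ρ))/√ρ, Q_{k+1} = ((X − (1+ρ))/√ρ)·Q_k − Q_{k−1},
the moments u_k = ∫ Q_k(x) μ_ρ(x) dx against the Marchenko–Pastur density satisfy
u_k = (−1)^k ρ^{k/2}. -/
theorem stmt_3 (ρ : ℝ) (hρ0 : 0 < ρ) (hρ1 : ρ < 1)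
    (Q : ℕ → Polynomial ℝ)
    (hQ0 : Q 0 = 1)
    (hQ1 : Q 1 = Polynomial.C (Real.sqrt ρ)⁻¹ * (Polynomial.X - Polynomial.C (1 + ρ)))
    (hrec : ∀ k, Q (k + 2) =
      Polynomial.C (Real.sqrt ρ)⁻¹ * (Polynomial.X - Polynomial.C (1 + ρ)) * Q (k + 1)
        - Q k) :
    ∀ k, (∫ x in ((1 - Real.sqrt ρ) ^ 2)..((1 + Real.sqrt ρ) ^ 2),
        (Q k).eval x * mpDensity ρ x) = (-1) ^ k * (Real.sqrt ρ) ^ k := by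
  have hs0 : 0 < Real.sqrt ρ := Real.sqrt_pos.2 hρ0
  set s : ℝ := Real.sqrt ρ with hs
  have hρs : s ^ 2 = ρ := Real.sq_sqrt hρ0.le
  have hs1 : s < 1 := by nlinarith [hρs]
  set g : ℝ → ℝ := fun θ => 1 + ρ + 2 * s * Real.cos θ with hgdef
  have ha0 : (0:ℝ) < (1 - s) ^ 2 := pow_pos (by linarith) 2
  have hga : ∀ θ, (1 - s) ^ 2 ≤ g θ := by
    intro θ
    have := Real.neg_one_le_cos θ
    simp only [hgdef]
    nlinarith
  have hgb : ∀ θ, g θ ≤ (1 + s) ^ 2 := by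
    intro θ
    have := Real.cos_le_one θ
    simp only [hgdef]
    nlinarith
  have hg0 : ∀ θ, 0 < g θ := fun θ => lt_of_lt_of_le ha0 (hga θ)
  have hgcont : Continuous g := by
    simp only [hgdef]; continuity
  -- trigonometric identity for Q
  have htrig : ∀ (m : ℕ) (θ : ℝ),
      (Q m).eval (g θ) * Real.sin θ = Real.sin (((m:ℝ) + 1) * θ) := by
    intro m
    induction m using Nat.twoStepInduction with
    | zero => intro θ; simp [hQ0]
    | one =>
      intro θ
      have hq1 : (Q 1).eval (g θ) = 2 * Real.cos θ := by
        simp only [hQ1, hgdef, eval_mul, eval_C, eval_sub, eval_X]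
        field_simp
        ring
      rw [hq1]
      push_cast
      rw [show ((1:ℝ) + 1) * θ = θ + θ by ring, Real.sin_add]
      ring
    | more n ih1 ih2 =>
      intro θ
      have hq : (Q (n+2)).eval (g θ) =
          2 * Real.cos θ * (Q (n+1)).eval (g θ) - (Q n).eval (g θ) := by
        rw [hrec n]
        simp only [eval_sub, eval_mul, eval_C, eval_X, hgdef]
        field_simp
        ring
      rw [hq]
      have e1 : (((n:ℝ)+2) + 1) * θ = ((n:ℝ)+1) * θ + (θ + θ) := by ring
      have e2 : (((n:ℝ)+1) + 1) * θ = ((n:ℝ)+1) * θ + θ := by ring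
      push_cast
      rw [e1, Real.sin_add, Real.sin_add, Real.cos_add]
      have h1 := ih1 θ
      have h2 := ih2 θ
      push_cast at h1 h2
      rw [e2, Real.sin_add] at h2
      linear_combination (2 * Real.cos θ) * h2 - h1 +
        Real.sin (((n:ℝ) + 1) * θ) * (Real.sin_sq_add_cos_sq θ)
  -- the transformed integrals
  set W : ℝ → ℝ := fun c => ∫ θ in (0:ℝ)..π, Real.sin (c * θ) * Real.sin θ / g θ
    with hWdef
  have hcont : ∀ c : ℝ, Continuous (fun θ => Real.sin (c * θ) * Real.sin θ / g θ) := by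
    intro c
    apply Continuous.div
    · exact (Real.continuous_sin.comp (continuous_const.mul continuous_id)).mul
        Real.continuous_sin
    · exact hgcont
    · exact fun θ => (hg0 θ).ne'
  have hcont2 : ∀ c : ℝ, Continuous (fun θ => Real.sin (c * θ) * Real.sin θ) := by
    intro c
    exact (Real.continuous_sin.comp (continuous_const.mul continuous_id)).mul
      Real.continuous_sin
  -- substitution step
  have key : ∀ m : ℕ, (∫ x in ((1 - s) ^ 2)..((1 + s) ^ 2),
      (Q m).eval x * mpDensity ρ x) = (2 / π) * W ((m:ℝ) + 1) := by
    intro m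
    have hπ0 : (0:ℝ) ≤ π := Real.pi_pos.le
    have hda : ∀ θ ∈ Set.uIcc (0:ℝ) π, HasDerivAt g (2 * s * (-Real.sin θ)) θ := by
      intro θ _
      have h1 : HasDerivAt (fun x : ℝ => Real.cos x) (-Real.sin θ) θ := Real.hasDerivAt_cos θ
      have h2 := (h1.const_mul (2 * s)).const_add (1 + ρ)
      simpa [hgdef, mul_comm] using h2
    have hd'cont : ContinuousOn (fun θ => 2 * s * (-Real.sin θ)) (Set.uIcc (0:ℝ) π) :=
      (continuous_const.mul Real.continuous_sin.neg).continuousOn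
    have hsub : g '' Set.uIcc (0:ℝ) π ⊆ Set.Icc ((1 - s) ^ 2) ((1 + s) ^ 2) := by
      rintro x ⟨θ, _, rfl⟩
      exact Set.mem_Icc.mpr ⟨hga θ, hgb θ⟩
    have hFcont : ContinuousOn (fun x => (Q m).eval x * mpDensity ρ x)
        (g '' Set.uIcc (0:ℝ) π) := by
      apply ContinuousOn.mono _ hsub
      apply ContinuousOn.mul ((Q m).continuous_aeval.continuousOn)
      unfold mpDensity
      rw [← hs]
      apply ContinuousOn.div
      · exact (Real.continuous_sqrt.comp (by continuity)).continuousOn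
      · exact (continuous_const.mul continuous_id).continuousOn
      · intro x hx
        have hx0 : 0 < x := lt_of_lt_of_le ha0 (Set.mem_Icc.mp hx).1
        positivity
    have hsubst := intervalIntegral.integral_comp_smul_deriv' hda hd'cont hFcont
    have hg0' : g 0 = (1 + s) ^ 2 := by
      show 1 + ρ + 2 * s * Real.cos 0 = (1 + s) ^ 2
      rw [Real.cos_zero]
      linear_combination -hρs
    have hgπ : g π = (1 - s) ^ 2 := by
      show 1 + ρ + 2 * s * Real.cos π = (1 - s) ^ 2
      rw [Real.cos_pi]
      linear_combination -hρs
    rw [hg0', hgπ] at hsubst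
    rw [intervalIntegral.integral_symm ((1 + s) ^ 2) ((1 - s) ^ 2), ← hsubst,
      ← intervalIntegral.integral_neg]
    rw [show W ((m:ℝ) + 1) =
      ∫ θ in (0:ℝ)..π, Real.sin (((m:ℝ) + 1) * θ) * Real.sin θ / g θ from rfl,
      ← intervalIntegral.integral_const_mul]
    apply intervalIntegral.integral_congr
    intro θ hθ
    rw [Set.uIcc_of_le hπ0] at hθ
    obtain ⟨hθ0, hθπ⟩ := Set.mem_Icc.mp hθ
    have hsin : 0 ≤ Real.sin θ := Real.sin_nonneg_of_nonneg_of_le_pi hθ0 hθπ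
    have harg : ((1 + s) ^ 2 - g θ) * (g θ - (1 - s) ^ 2) = (2 * s * Real.sin θ) ^ 2 := by
      show ((1 + s) ^ 2 - (1 + ρ + 2 * s * Real.cos θ)) *
        (1 + ρ + 2 * s * Real.cos θ - (1 - s) ^ 2) = (2 * s * Real.sin θ) ^ 2
      rw [← hρs]
      linear_combination (-4 * s^2) * (Real.sin_sq_add_cos_sq θ)
    have hmp : mpDensity ρ (g θ) = 2 * s * Real.sin θ / (2 * π * ρ * g θ) := by
      unfold mpDensity
      rw [← hs, harg, Real.sqrt_sq (mul_nonneg (by positivity) hsin)]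
    simp only [Pi.neg_apply, Function.comp_apply, smul_eq_mul]
    rw [hmp]
    have hE := htrig m θ
    have hgne := (hg0 θ).ne'
    have hπne : (π:ℝ) ≠ 0 := Real.pi_ne_zero
    rw [← hE, ← hρs]
    field_simp
  -- value of the auxiliary "free" integral
  have hcosc : ∀ c : ℝ, Continuous (fun θ => Real.cos (c * θ)) := fun c =>
    Real.continuous_cos.comp (continuous_const.mul continuous_id)
  have hcosint : ∀ c : ℝ, c ≠ 0 → Real.sin (c * π) = 0 →
      (∫ θ in (0:ℝ)..π, Real.cos (c * θ)) = 0 := by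
    intro c hc hsin
    rw [intervalIntegral.integral_comp_mul_left (fun x => Real.cos x) hc]
    rw [integral_cos, hsin, mul_zero, Real.sin_zero, sub_zero, smul_zero]
  have hS : ∀ n : ℕ, (∫ θ in (0:ℝ)..π, Real.sin (((n:ℝ) + 2) * θ) * Real.sin θ) = 0 := by
    intro n
    have hpt : ∀ θ : ℝ, Real.sin (((n:ℝ) + 2) * θ) * Real.sin θ =
        (Real.cos (((n:ℝ) + 1) * θ) - Real.cos (((n:ℝ) + 3) * θ)) / 2 := by
      intro θ
      rw [show ((n:ℝ) + 1) * θ = ((n:ℝ) + 2) * θ - θ by ring,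
        show ((n:ℝ) + 3) * θ = ((n:ℝ) + 2) * θ + θ by ring,
        Real.cos_sub, Real.cos_add]
      ring
    rw [intervalIntegral.integral_congr (g := fun θ =>
      (Real.cos (((n:ℝ) + 1) * θ) - Real.cos (((n:ℝ) + 3) * θ)) / 2)
      (fun θ _ => hpt θ)]
    rw [intervalIntegral.integral_div,
      intervalIntegral.integral_sub ((hcosc _).intervalIntegrable 0 π)
        ((hcosc _).intervalIntegrable 0 π)]
    have z1 : (∫ θ in (0:ℝ)..π, Real.cos (((n:ℝ) + 1) * θ)) = 0 := by
      apply hcosint _ (by positivity)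
      rw [show ((n:ℝ) + 1) * π = ((n + 1 : ℕ):ℝ) * π by push_cast; ring]
      exact Real.sin_nat_mul_pi _
    have z3 : (∫ θ in (0:ℝ)..π, Real.cos (((n:ℝ) + 3) * θ)) = 0 := by
      apply hcosint _ (by positivity)
      rw [show ((n:ℝ) + 3) * π = ((n + 3 : ℕ):ℝ) * π by push_cast; ring]
      exact Real.sin_nat_mul_pi _
    rw [z1, z3]
    norm_num
  -- recurrences
  have hR1 : ∀ c : ℝ, W (c + 2) =
      (1 / s) * (∫ θ in (0:ℝ)..π, Real.sin ((c + 1) * θ) * Real.sin θ)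
        - ((1 + ρ) / s) * W (c + 1) - W c := by
    intro c
    have hpt : ∀ θ : ℝ, Real.sin ((c + 2) * θ) * Real.sin θ / g θ =
        (1 / s) * (Real.sin ((c + 1) * θ) * Real.sin θ)
          - ((1 + ρ) / s) * (Real.sin ((c + 1) * θ) * Real.sin θ / g θ)
          - Real.sin (c * θ) * Real.sin θ / g θ := by
      intro θ
      have hgne := (hg0 θ).ne'
      have hsne := hs0.ne'
      have hgθ : g θ = 1 + ρ + 2 * s * Real.cos θ := rfl
      have hA : Real.sin ((c + 2) * θ) =
          Real.sin ((c + 1) * θ) * Real.cos θ + Real.cos ((c + 1) * θ) * Real.sin θ := by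
        rw [show (c + 2) * θ = (c + 1) * θ + θ by ring, Real.sin_add]
      have hB : Real.sin (c * θ) =
          Real.sin ((c + 1) * θ) * Real.cos θ - Real.cos ((c + 1) * θ) * Real.sin θ := by
        rw [show c * θ = (c + 1) * θ - θ by ring, Real.sin_sub]
      have hmul : Real.sin ((c + 2) * θ) * Real.sin θ * s =
          (g θ - (1 + ρ)) * (Real.sin ((c + 1) * θ) * Real.sin θ)
            - s * (Real.sin (c * θ) * Real.sin θ) := by
        rw [hgθ]
        linear_combination (s * Real.sin θ) * hA + (s * Real.sin θ) * hB
      rw [div_eq_iff hgne, sub_mul, sub_mul, mul_assoc ((1 + ρ) / s),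
        div_mul_cancel₀ _ hgne, div_mul_cancel₀ _ hgne]
      have hinv : s * s⁻¹ = 1 := mul_inv_cancel₀ hsne
      linear_combination (1 / s) * hmul -
        (Real.sin ((c + 2) * θ) * Real.sin θ + Real.sin θ * Real.sin (c * θ)) * hinv
    rw [show W (c + 2) = ∫ θ in (0:ℝ)..π, Real.sin ((c + 2) * θ) * Real.sin θ / g θ from rfl]
    rw [intervalIntegral.integral_congr (g := fun θ =>
      (1 / s) * (Real.sin ((c + 1) * θ) * Real.sin θ)
        - ((1 + ρ) / s) * (Real.sin ((c + 1) * θ) * Real.sin θ / g θ)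
        - Real.sin (c * θ) * Real.sin θ / g θ) (fun θ _ => hpt θ)]
    have i1 : IntervalIntegrable
        (fun θ => (1 / s) * (Real.sin ((c + 1) * θ) * Real.sin θ)) MeasureTheory.volume 0 π :=
      (continuous_const.mul (hcont2 (c + 1))).intervalIntegrable 0 π
    have i2 : IntervalIntegrable
        (fun θ => ((1 + ρ) / s) * (Real.sin ((c + 1) * θ) * Real.sin θ / g θ))
        MeasureTheory.volume 0 π :=
      (continuous_const.mul (hcont (c + 1))).intervalIntegrable 0 π
    have i3 : IntervalIntegrable
        (fun θ => Real.sin (c * θ) * Real.sin θ / g θ) MeasureTheory.volume 0 π :=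
      (hcont c).intervalIntegrable 0 π
    rw [intervalIntegral.integral_sub (i1.sub i2) i3, intervalIntegral.integral_sub i1 i2,
      intervalIntegral.integral_const_mul, intervalIntegral.integral_const_mul]
  -- boundedness
  have hBd : ∀ c : ℝ, |W c| ≤ π / (1 - s) ^ 2 := by
    intro c
    have := intervalIntegral.norm_integral_le_of_norm_le_const
      (C := 1 / (1 - s) ^ 2) (f := fun θ => Real.sin (c * θ) * Real.sin θ / g θ)
      (a := 0) (b := π) ?_
    · rw [Real.norm_eq_abs] at this
      calc |W c| ≤ 1 / (1 - s)^2 * |π - 0| := this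
        _ = π / (1 - s) ^ 2 := by
            rw [sub_zero, abs_of_pos Real.pi_pos]; ring
    · intro θ _
      rw [Real.norm_eq_abs, abs_div, abs_of_pos (hg0 θ)]
      rw [div_le_div_iff₀ (hg0 θ) ha0]
      have h1 : |Real.sin (c * θ) * Real.sin θ| ≤ 1 := by
        rw [abs_mul]
        exact mul_le_one₀ (Real.abs_sin_le_one _) (abs_nonneg _) (Real.abs_sin_le_one _)
      nlinarith [hga θ, abs_nonneg (Real.sin (c * θ) * Real.sin θ)]
  -- the sequence T and its closed form
  set T : ℕ → ℝ := fun n => W ((n:ℝ) + 1) with hTdef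
  have hsne : s ≠ 0 := hs0.ne'
  have hR1' : ∀ n : ℕ, T (n + 2) = -((1 + ρ) / s) * T (n + 1) - T n := by
    intro n
    have h := hR1 ((n:ℝ) + 1)
    have hfree : (∫ θ in (0:ℝ)..π, Real.sin (((n:ℝ) + 1 + 1) * θ) * Real.sin θ) = 0 := by
      have := hS n
      rw [show ((n:ℝ) + 1 + 1) = ((n:ℝ) + 2) by ring]
      exact this
    rw [hfree, mul_zero] at h
    show W (((n + 2:ℕ):ℝ) + 1) = -((1 + ρ) / s) * W (((n + 1:ℕ):ℝ) + 1) - W ((n:ℝ) + 1)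
    rw [show ((n + 2:ℕ):ℝ) + 1 = ((n:ℝ) + 1) + 2 by push_cast; ring,
      show ((n + 1:ℕ):ℝ) + 1 = ((n:ℝ) + 1) + 1 by push_cast; ring, h]
    ring
  have hR0 : T 1 = (1 / s) * (π / 2) - ((1 + ρ) / s) * T 0 := by
    have h := hR1 0
    have hW0 : W 0 = 0 := by
      show (∫ θ in (0:ℝ)..π, Real.sin (0 * θ) * Real.sin θ / g θ) = 0
      simp
    have hfree : (∫ θ in (0:ℝ)..π, Real.sin ((0 + 1) * θ) * Real.sin θ) = π / 2 := by
      rw [intervalIntegral.integral_congr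
        (g := fun θ => Real.sin θ ^ 2)
        (fun θ _ => by rw [zero_add, one_mul]; ring)]
      rw [integral_sin_sq]
      simp [Real.sin_pi, Real.sin_zero]
    rw [hfree, hW0] at h
    show W (((1:ℕ):ℝ) + 1) = _
    rw [show ((1:ℕ):ℝ) + 1 = (0:ℝ) + 2 by norm_num, h]
    have hT0 : T 0 = W ((0:ℝ) + 1) := by
      show W (((0:ℕ):ℝ) + 1) = _
      norm_num
    rw [← hT0]
    ring
  set e : ℕ → ℝ := fun n => T n - (π / 2) * (-s) ^ n with hedef
  have he2 : ∀ n : ℕ, e (n + 2) = -((1 + ρ) / s) * e (n + 1) - e n := by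
    intro n
    show T (n + 2) - (π / 2) * (-s) ^ (n + 2) =
      -((1 + ρ) / s) * (T (n + 1) - (π / 2) * (-s) ^ (n + 1)) - (T n - (π / 2) * (-s) ^ n)
    rw [hR1' n, ← hρs, pow_succ, pow_succ]
    field_simp
    ring
  have he1 : e 1 = -((1 + ρ) / s) * e 0 := by
    show T 1 - (π / 2) * (-s) ^ 1 = -((1 + ρ) / s) * (T 0 - (π / 2) * (-s) ^ 0)
    rw [hR0, ← hρs]
    field_simp
    ring
  have hf : ∀ n : ℕ, e (n + 1) + s * e n = (-s⁻¹) ^ (n + 1) * e 0 := by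
    intro n
    induction n with
    | zero =>
      rw [he1, pow_one, ← hρs]
      field_simp
      ring
    | succ n ih =>
      rw [he2 n, ← hρs, pow_succ (-s⁻¹) (n + 1),
        mul_comm ((-s⁻¹) ^ (n + 1)) (-s⁻¹), mul_assoc, ← ih]
      field_simp
      ring
  have hebd : ∀ n : ℕ, |e n| ≤ π / (1 - s) ^ 2 + π / 2 := by
    intro n
    have h1 : |T n| ≤ π / (1 - s) ^ 2 := hBd _
    have h2 : |(π / 2) * (-s) ^ n| ≤ π / 2 := by
      rw [abs_mul, abs_pow, abs_neg, abs_of_pos hs0, abs_of_pos (by positivity : (0:ℝ) < π / 2)]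
      have hp : s ^ n ≤ 1 := pow_le_one₀ hs0.le hs1.le
      calc π / 2 * s ^ n ≤ π / 2 * 1 :=
            mul_le_mul_of_nonneg_left hp (by positivity)
        _ = π / 2 := mul_one _
    calc |e n| = |T n + -((π / 2) * (-s) ^ n)| := by rw [← sub_eq_add_neg]
      _ ≤ |T n| + |-((π / 2) * (-s) ^ n)| := abs_add_le _ _
      _ = |T n| + |(π / 2) * (-s) ^ n| := by rw [abs_neg]
      _ ≤ π / (1 - s) ^ 2 + π / 2 := add_le_add h1 h2
  have he0 : e 0 = 0 := by
    set C : ℝ := π / (1 - s) ^ 2 + π / 2 with hCdef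
    have hC0 : 0 ≤ C := le_trans (abs_nonneg _) (hebd 0)
    have hkey : ∀ n : ℕ, |e 0| ≤ (C + C) * s ^ (n + 1) := by
      intro n
      have heq : e 0 = (-s) ^ (n + 1) * (e (n + 1) + s * e n) := by
        rw [hf n, ← mul_assoc, ← mul_pow,
          show (-s) * (-s⁻¹) = s * s⁻¹ by ring, mul_inv_cancel₀ hsne, one_pow, one_mul]
      rw [heq, abs_mul, abs_pow, abs_neg, abs_of_pos hs0]
      have hsum : |e (n + 1) + s * e n| ≤ C + C := by
        calc |e (n + 1) + s * e n| ≤ |e (n + 1)| + |s * e n| := abs_add_le _ _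
          _ ≤ C + C := by
              apply add_le_add (hebd (n + 1))
              rw [abs_mul, abs_of_pos hs0]
              calc s * |e n| ≤ 1 * |e n| :=
                    mul_le_mul_of_nonneg_right hs1.le (abs_nonneg _)
                _ = |e n| := one_mul _
                _ ≤ C := hebd n
      have hsp : (0:ℝ) ≤ s ^ (n + 1) := by positivity
      calc s ^ (n + 1) * |e (n + 1) + s * e n| ≤ s ^ (n + 1) * (C + C) :=
            mul_le_mul_of_nonneg_left hsum hsp
        _ = (C + C) * s ^ (n + 1) := mul_comm _ _
    have hlim : Filter.Tendsto (fun n : ℕ => (C + C) * s ^ (n + 1)) Filter.atTop (nhds 0) := by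
      have h1 := tendsto_pow_atTop_nhds_zero_of_lt_one hs0.le hs1
      have h2 : Filter.Tendsto (fun n : ℕ => s ^ (n + 1)) Filter.atTop (nhds 0) :=
        h1.comp (Filter.tendsto_add_atTop_nat 1)
      simpa using h2.const_mul (C + C)
    have hle : |e 0| ≤ 0 := ge_of_tendsto' hlim hkey
    exact abs_eq_zero.mp (le_antisymm hle (abs_nonneg _))
  have hez : ∀ n : ℕ, e n = 0 := by
    intro n
    induction n with
    | zero => exact he0
    | succ n ih =>
      have h := hf n
      rw [he0, mul_zero, ih, mul_zero, add_zero] at h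
      exact h
  have hTval : ∀ n : ℕ, T n = (π / 2) * (-s) ^ n := by
    intro n
    have h := hez n
    have : T n - (π / 2) * (-s) ^ n = 0 := h
    linarith
  intro k
  rw [key k]
  have : W ((k:ℝ) + 1) = T k := rfl
  rw [this, hTval k]
  have hπ : (π:ℝ) ≠ 0 := Real.pi_ne_zero
  rw [neg_pow]
  field_simp
end

section
/- Let 0 < γ < ξ < 1, ρ = γ/ξ, λ_{h,r} = (√(1−γ) − √((1−ξ)ρ))² and Λ_{h,r} = (√(1−γ) + √((1−ξ)ρ))². Then (1−√ρ)² ≤ λ_{h,r} and Λ_{h,r} ≤ (1+√ρ)², i.e., the support [λ_{h,r}, Λ_{h,r}] of the rescaled SRHT limiting density is contained in the Marchenko–Pastur support [(1−√ρ)², (1+√ρ)²]. -/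
/-- for 0 < γ < ξ < 1 and ρ = γ/ξ, the support
[λ_{h,r}, Λ_{h,r}] = [(√(1−γ) − √((1−ξ)ρ))², (√(1−γ) + √((1−ξ)ρ))²] of the rescaled
SRHT limiting density is contained in the Marchenko–Pastur support
[(1−√ρ)², (1+√ρ)²]. -/
theorem stmt_6 (γ ξ : ℝ) (hγ : 0 < γ) (hγξ : γ < ξ) (hξ : ξ < 1) :
    (1 - Real.sqrt (γ / ξ)) ^ 2 ≤
      (Real.sqrt (1 - γ) - Real.sqrt ((1 - ξ) * (γ / ξ))) ^ 2 ∧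
    (Real.sqrt (1 - γ) + Real.sqrt ((1 - ξ) * (γ / ξ))) ^ 2 ≤
      (1 + Real.sqrt (γ / ξ)) ^ 2 := by
  have hξ0 : 0 < ξ := hγ.trans hγξ
  set ρ := γ / ξ with hρdef
  have hρ0 : 0 < ρ := div_pos hγ hξ0
  have hρ1 : ρ < 1 := (div_lt_one hξ0).mpr hγξ
  have hγρ : γ = ρ * ξ := by rw [hρdef, div_mul_cancel₀ γ hξ0.ne']
  set a := Real.sqrt ρ with hadef
  set b := Real.sqrt (1 - ξ) with hbdef
  have ha0 : 0 ≤ a := Real.sqrt_nonneg _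
  have hb0 : 0 ≤ b := Real.sqrt_nonneg _
  have ha2 : a ^ 2 = ρ := Real.sq_sqrt hρ0.le
  have hb2 : b ^ 2 = 1 - ξ := Real.sq_sqrt (by linarith)
  have ha1 : a ≤ 1 := by nlinarith
  have hb1 : b ≤ 1 := by nlinarith
  have hab : Real.sqrt ((1 - ξ) * ρ) = b * a := by
    rw [Real.sqrt_mul (by linarith)]
  have hγab : 1 - γ = 1 - a ^ 2 + a ^ 2 * b ^ 2 := by
    rw [ha2, hb2]; nlinarith
  have hs0 : 0 ≤ Real.sqrt (1 - γ) := Real.sqrt_nonneg _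
  have hs2 : Real.sqrt (1 - γ) ^ 2 = 1 - γ := Real.sq_sqrt (by linarith)
  have hs1 : Real.sqrt (1 - γ) ≤ 1 := by
    nlinarith
  have hkey : 1 - a + a * b ≤ Real.sqrt (1 - γ) := by
    nlinarith [sq_nonneg (Real.sqrt (1 - γ) - (1 - a + a * b)),
      mul_nonneg (mul_nonneg ha0 (by linarith : (0:ℝ) ≤ 1 - a)) (by linarith : (0:ℝ) ≤ 1 - b)]
  constructor
  · rw [hab]
    have h1 : 0 ≤ 1 - a := by linarith
    have h2 : 1 - a ≤ Real.sqrt (1 - γ) - b * a := by nlinarith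
    exact pow_le_pow_left₀ h1 h2 2
  · rw [hab]
    have h2 : Real.sqrt (1 - γ) + b * a ≤ 1 + a := by nlinarith
    exact pow_le_pow_left₀ (by positivity) h2 2
end

section
/- For 0 < γ < ξ < 1 and ρ = γ/ξ, the inequality ρ·(1−ξ)/(1−γ) < ρ·ξ(1−ξ)/(γ² + ξ − 2γξ) holds; equivalently, (1−ξ)/(1−γ) < ξ(1−ξ)/(γ² + ξ − 2ξγ). -/
/-- for 0 < γ < ξ < 1 and ρ = γ/ξ, one has γ² + ξ − 2γξ > 0 and
ρ(1−ξ)/(1−γ) < ρ·ξ(1−ξ)/(γ² + ξ − 2γξ); equivalently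
(1−ξ)/(1−γ) < ξ(1−ξ)/(γ² + ξ − 2ξγ). -/
theorem stmt_8 (γ ξ : ℝ) (hγ : 0 < γ) (hγξ : γ < ξ) (hξ : ξ < 1) :
    0 < γ ^ 2 + ξ - 2 * γ * ξ ∧
    (γ / ξ) * (1 - ξ) / (1 - γ) <
      (γ / ξ) * (ξ * (1 - ξ)) / (γ ^ 2 + ξ - 2 * γ * ξ) ∧
    (1 - ξ) / (1 - γ) < ξ * (1 - ξ) / (γ ^ 2 + ξ - 2 * ξ * γ) := by
  have hD : 0 < γ ^ 2 + ξ - 2 * γ * ξ := by nlinarith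
  have h1γ : 0 < 1 - γ := by linarith
  have h1ξ : 0 < 1 - ξ := by linarith
  have hξ0 : 0 < ξ := lt_trans hγ hγξ
  have key : (1 - ξ) / (1 - γ) < ξ * (1 - ξ) / (γ ^ 2 + ξ - 2 * ξ * γ) := by
    rw [div_lt_div_iff₀ h1γ (by nlinarith)]
    nlinarith [mul_pos h1ξ (mul_pos hγ (sub_pos.mpr hγξ))]
  refine ⟨hD, ?_, key⟩
  rw [div_lt_div_iff₀ h1γ hD]
  have hρ : 0 < γ / ξ := div_pos hγ hξ0
  nlinarith [mul_pos (div_pos hγ hξ0) (mul_pos (mul_pos h1ξ hγ) (sub_pos.mpr hγξ)), mul_pos hγ (sub_pos.mpr hγξ)]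
end
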